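/- Let k ≥ 3. Then u(k,2) ≤ k + 1, i.e., there exists a set of uniqueness for (B^k_2)_+ of cardinality at most k+1. -/

import Mathlib

/-- Number of coordinates of `x ∈ {−1,+1}^k` (encoded as `Fin k → Bool`, `true ↔ +1`)
equal to `+1`. -/
def PosCount {k : ℕ} (x : Fin k → Bool) : ℕ :=
  (Finset.univ.filter fun i => x i = true).card

/-- Walsh function `w_L(x) = ∏_{j ∈ L} x_j` on `{−1,+1}^k`, `true ↔ +1`. -/
noncomputable def Walsh {k : ℕ} (L : Finset (Fin k)) : (Fin k → Bool) → ℝ :=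
  fun x => ∏ j ∈ L, (if x j then (1 : ℝ) else -1)

/-- `B^k_q`: the linear span of the Walsh functions `w_L` with `|L| ≤ q`. -/
noncomputable def BSpace (k q : ℕ) : Submodule ℝ ((Fin k → Bool) → ℝ) :=
  Submodule.span ℝ { f | ∃ L : Finset (Fin k), L.card ≤ q ∧ f = Walsh L }

/-- `(B^k_q)_+`: the nonnegative cone of `B^k_q`. -/
noncomputable def BPlus (k q : ℕ) : Set ((Fin k → Bool) → ℝ) :=
  { φ | φ ∈ BSpace k q ∧ ∀ x, 0 ≤ φ x }

/-- `U` is a set of uniqueness for the class `C`. -/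
def IsUniqSet {k : ℕ} (C : Set ((Fin k → Bool) → ℝ)) (U : Set (Fin k → Bool)) : Prop :=
  ∀ φ ∈ C, (∀ x ∈ U, φ x = 0) → φ = 0

/-- `u(k,q)`: minimal cardinality of a set of uniqueness for `(B^k_q)_+`. -/
noncomputable def uMin (k q : ℕ) : ℕ :=
  sInf { n | ∃ U : Set (Fin k → Bool), U.ncard = n ∧ IsUniqSet (BPlus k q) U }

/-- Level set `W_D`. -/
def LevelSet (k : ℕ) (D : Set ℕ) : Set (Fin k → Bool) :=
  { x | PosCount x ∈ D }

/-- Subcube of `{−1,+1}^k` obtained by fixing the coordinates in `F` to the signs `ε`. -/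
def Subcube {k : ℕ} (F : Finset (Fin k)) (ε : Fin k → Bool) : Set (Fin k → Bool) :=
  { x | ∀ i ∈ F, x i = ε i }

/-- `g(k,q)`: minimal cardinality of a subset of `{−1,+1}^k` meeting every `(k−q)`-subcube. -/
noncomputable def gMin (k q : ℕ) : ℕ :=
  sInf { n | ∃ A : Set (Fin k → Bool), A.ncard = n ∧
    ∀ (F : Finset (Fin k)) (ε : Fin k → Bool), F.card = q → (A ∩ Subcube F ε).Nonempty }

/-- Binomial coefficient `C(n,r)` for integer `r`, with `C(n,r) = 0` for `r < 0` or `r > n`. -/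
def Cb (n : ℕ) (r : ℤ) : ℕ := if r < 0 then 0 else n.choose r.toNat

-- aux development
def botv (k : ℕ) : Fin k → Bool := fun _ => false
def topv (k : ℕ) : Fin k → Bool := fun _ => true
def eVec {k : ℕ} (i : Fin k) : Fin k → Bool := fun j => decide (j = i)

lemma posCount_eq_zero_iff {k : ℕ} (x : Fin k → Bool) :
    PosCount x = 0 ↔ x = botv k := by
  unfold PosCount botv
  rw [Finset.card_eq_zero, Finset.filter_eq_empty_iff]
  constructor
  · intro h; funext j; simpa using h (Finset.mem_univ j)
  · intro h j _; subst h; simp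

lemma posCount_eq_k_iff {k : ℕ} (x : Fin k → Bool) :
    PosCount x = k ↔ x = topv k := by
  unfold PosCount topv
  constructor
  · intro h
    have : (Finset.univ.filter fun i => x i = true) = Finset.univ := by
      apply Finset.eq_univ_of_card
      simpa using h
    funext j
    have := Finset.mem_filter.mp (this ▸ Finset.mem_univ j)
    simpa using this.2
  · intro h; subst h; simp

lemma eVec_injective {k : ℕ} : Function.Injective (eVec (k := k)) := by
  intro i i' h
  have : eVec i i = eVec i' i := by rw [h]
  simpa [eVec] using this.symm

lemma posCount_eVec {k : ℕ} (i : Fin k) : PosCount (eVec i) = 1 := by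
  unfold PosCount
  have : (Finset.univ.filter fun j => eVec i j = true) = {i} := by
    ext j; simp [eVec]
  rw [this, Finset.card_singleton]

lemma posCount_eq_one_iff {k : ℕ} (x : Fin k → Bool) :
    PosCount x = 1 ↔ ∃ i, x = eVec i := by
  constructor
  · intro h
    obtain ⟨i, hi⟩ := Finset.card_eq_one.mp h
    refine ⟨i, funext fun j => ?_⟩
    have hmem : ∀ j', x j' = true ↔ j' = i := by
      intro j'
      have := Finset.ext_iff.mp hi j'
      simpa using this
    by_cases hji : j = i
    · simp [eVec, hji, (hmem i).mpr rfl]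
    · simp only [eVec, decide_eq_true_eq]
      have : x j ≠ true := fun hc => hji ((hmem j).mp hc)
      simp [Bool.eq_false_iff.mpr this, hji]
  · rintro ⟨i, rfl⟩; exact posCount_eVec i

set_option maxHeartbeats 1000000 in
lemma sum_walsh_eq_zero {k : ℕ} {L : Finset (Fin k)} (hL : L.Nonempty) :
    ∑ x : Fin k → Bool, Walsh L x = 0 := by
  have h1 : ∀ x : Fin k → Bool, Walsh L x =
      ∏ j : Fin k, (if j ∈ L then (if x j then (1:ℝ) else -1) else 1) := by
    intro x
    rw [Finset.prod_ite_mem, Finset.univ_inter]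
    rfl
  calc ∑ x : Fin k → Bool, Walsh L x
      = ∑ x : Fin k → Bool, ∏ j : Fin k,
          (if j ∈ L then (if x j then (1:ℝ) else -1) else 1) := by
        exact Finset.sum_congr rfl fun x _ => h1 x
    _ = ∏ j : Fin k, ∑ b : Bool, (if j ∈ L then (if b then (1:ℝ) else -1) else 1) :=
        (Fintype.prod_sum (R := ℝ)
          (fun (j : Fin k) (b : Bool) =>
            if j ∈ L then (if b then (1:ℝ) else -1) else 1)).symm
    _ = 0 := by
        obtain ⟨a, ha⟩ := hL
        apply Finset.prod_eq_zero (Finset.mem_univ a)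
        simp [ha]

noncomputable def nuW (k : ℕ) (x : Fin k → Bool) : ℝ :=
  1 + (if PosCount x = 0 then ((k:ℝ) - 3) * 2^(k-2) else 0)
    - (if PosCount x = 1 then (2:ℝ)^(k-2) else 0)
    - (if PosCount x = k then (2:ℝ)^(k-2) else 0)

lemma nuW_pos {k : ℕ} (hk : 3 ≤ k) (x : Fin k → Bool)
    (h1 : PosCount x ≠ 1) (hkk : PosCount x ≠ k) : 0 < nuW k x := by
  unfold nuW
  have hge : (3:ℝ) ≤ (k:ℝ) := by exact_mod_cast hk
  have hp : (0:ℝ) < 2^(k-2) := by positivity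
  have hk0 : ¬ (0 = k) := by omega
  have hnn : (0:ℝ) ≤ ((k:ℝ) - 3) * 2^(k-2) := mul_nonneg (by linarith) hp.le
  by_cases h0 : PosCount x = 0 <;> simp [h0, h1, hkk, hk0] <;> nlinarith

lemma filter_posCount_zero (k : ℕ) :
    (Finset.univ.filter fun x : Fin k → Bool => PosCount x = 0) = {botv k} := by
  ext x; simp [posCount_eq_zero_iff]

lemma filter_posCount_k (k : ℕ) :
    (Finset.univ.filter fun x : Fin k → Bool => PosCount x = k) = {topv k} := by
  ext x; simp [posCount_eq_k_iff]

lemma filter_posCount_one (k : ℕ) :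
    (Finset.univ.filter fun x : Fin k → Bool => PosCount x = 1) =
      Finset.image eVec Finset.univ := by
  ext x
  simp only [Finset.mem_filter, Finset.mem_univ, true_and, Finset.mem_image,
    posCount_eq_one_iff]
  constructor
  · rintro ⟨i, rfl⟩; exact ⟨i, rfl⟩
  · rintro ⟨i, rfl⟩; exact ⟨i, rfl⟩

lemma card_cube (k : ℕ) : Fintype.card (Fin k → Bool) = 2 ^ k := by
  simp [Fintype.card_fun]

lemma sum_nuW_walsh {k : ℕ} (hk : 3 ≤ k) {L : Finset (Fin k)} (hL : L.card ≤ 2) :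
    ∑ x : Fin k → Bool, nuW k x * Walsh L x = 0 := by
  have hkk : k - 2 + 2 = k := by omega
  have h2k : (2:ℝ)^k = 4 * 2^(k-2) := by
    calc (2:ℝ)^k = 2^(k-2+2) := by rw [hkk]
    _ = 2^(k-2) * 2^2 := by rw [pow_add]
    _ = 4 * 2^(k-2) := by ring
  have hsplit : ∑ x : Fin k → Bool, nuW k x * Walsh L x =
      (∑ x : Fin k → Bool, Walsh L x)
      + ((k:ℝ)-3) * 2^(k-2) * Walsh L (botv k)
      - (2:ℝ)^(k-2) * (∑ i : Fin k, Walsh L (eVec i))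
      - (2:ℝ)^(k-2) * Walsh L (topv k) := by
    have e1 : ∀ x, nuW k x * Walsh L x =
        Walsh L x + (if PosCount x = 0 then ((k:ℝ)-3)*2^(k-2) * Walsh L x else 0)
          - (if PosCount x = 1 then (2:ℝ)^(k-2) * Walsh L x else 0)
          - (if PosCount x = k then (2:ℝ)^(k-2) * Walsh L x else 0) := by
      intro x; unfold nuW; split_ifs <;> ring
    rw [Finset.sum_congr rfl fun x _ => e1 x]
    rw [Finset.sum_sub_distrib, Finset.sum_sub_distrib, Finset.sum_add_distrib]
    rw [← Finset.sum_filter, ← Finset.sum_filter, ← Finset.sum_filter]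
    rw [filter_posCount_zero, filter_posCount_k, filter_posCount_one]
    rw [Finset.sum_singleton, Finset.sum_singleton,
      Finset.sum_image (fun i _ j _ h => eVec_injective h)]
    rw [← Finset.mul_sum]
  rw [hsplit]
  have hcase : L.card = 0 ∨ L.card = 1 ∨ L.card = 2 := by omega
  rcases hcase with h0 | h1 | h2
  · -- L = ∅
    rw [Finset.card_eq_zero] at h0
    subst h0
    have hw : ∀ x : Fin k → Bool, Walsh (∅ : Finset (Fin k)) x = 1 := by
      intro x; simp [Walsh]
    simp only [hw]
    rw [Finset.sum_const, Finset.sum_const, Finset.card_univ, Finset.card_univ, card_cube,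
      Fintype.card_fin]
    simp only [nsmul_eq_mul, mul_one]
    push_cast
    rw [h2k]
    ring
  · -- L = {a}
    obtain ⟨a, rfl⟩ := Finset.card_eq_one.mp h1
    have hw : ∀ x : Fin k → Bool, Walsh ({a} : Finset (Fin k)) x
        = (if x a then (1:ℝ) else -1) := by
      intro x; simp [Walsh]
    have hsum0 : ∑ x : Fin k → Bool, Walsh ({a} : Finset (Fin k)) x = 0 :=
      sum_walsh_eq_zero ⟨a, Finset.mem_singleton_self a⟩
    rw [hsum0]
    simp only [hw]
    have he : ∀ i : Fin k, (if eVec i a then (1:ℝ) else -1)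
        = (if i = a then (2:ℝ) else 0) - 1 := by
      intro i
      by_cases h : i = a
      · subst h; norm_num [eVec]
      · have h' : ¬ (a = i) := fun hh => h hh.symm
        norm_num [eVec, h, h']
    rw [Finset.sum_congr rfl fun i _ => he i]
    rw [Finset.sum_sub_distrib, Finset.sum_ite_eq' Finset.univ a fun _ => (2:ℝ)]
    simp only [Finset.mem_univ, if_true, Finset.sum_const, Finset.card_univ, Fintype.card_fin,
      botv, topv, Bool.false_eq_true, if_false, if_true]
    ring
  · -- L = {a, b}
    obtain ⟨a, b, hab, rfl⟩ := Finset.card_eq_two.mp h2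
    have hw : ∀ x : Fin k → Bool, Walsh ({a, b} : Finset (Fin k)) x
        = (if x a then (1:ℝ) else -1) * (if x b then (1:ℝ) else -1) := by
      intro x; unfold Walsh; rw [Finset.prod_pair hab]
    have hsum0 : ∑ x : Fin k → Bool, Walsh ({a, b} : Finset (Fin k)) x = 0 :=
      sum_walsh_eq_zero ⟨a, by simp⟩
    rw [hsum0]
    simp only [hw]
    have he : ∀ i : Fin k, (if eVec i a then (1:ℝ) else -1) * (if eVec i b then (1:ℝ) else -1)
        = 1 - (if i = a then (2:ℝ) else 0) - (if i = b then (2:ℝ) else 0) := by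
      intro i
      by_cases ha : i = a
      · subst ha
        have hb' : ¬ (b = i) := fun hh => hab hh.symm
        norm_num [eVec, hb', hab]
      · by_cases hb : i = b
        · subst hb
          have ha' : ¬ (a = i) := fun hh => ha hh.symm
          norm_num [eVec, ha', ha]
        · have ha' : ¬ (a = i) := fun hh => ha hh.symm
          have hb' : ¬ (b = i) := fun hh => hb hh.symm
          norm_num [eVec, ha', hb', ha, hb]
    rw [Finset.sum_congr rfl fun i _ => he i]
    rw [Finset.sum_sub_distrib, Finset.sum_sub_distrib,
      Finset.sum_ite_eq' Finset.univ a fun _ => (2:ℝ),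
      Finset.sum_ite_eq' Finset.univ b fun _ => (2:ℝ)]
    simp only [Finset.mem_univ, if_true, Finset.sum_const, Finset.card_univ, Fintype.card_fin,
      botv, topv, Bool.false_eq_true, if_false, if_true]
    ring

noncomputable def Tfun (k : ℕ) : ((Fin k → Bool) → ℝ) →ₗ[ℝ] ℝ where
  toFun f := ∑ x : Fin k → Bool, nuW k x * f x
  map_add' f g := by
    simp only [Pi.add_apply, mul_add]
    rw [Finset.sum_add_distrib]
  map_smul' c f := by
    simp only [Pi.smul_apply, smul_eq_mul, RingHom.id_apply]
    rw [Finset.mul_sum]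
    exact Finset.sum_congr rfl fun x _ => by ring

lemma sum_nuW_of_mem {k : ℕ} (hk : 3 ≤ k) {f : (Fin k → Bool) → ℝ}
    (hf : f ∈ BSpace k 2) : ∑ x : Fin k → Bool, nuW k x * f x = 0 := by
  have hle : BSpace k 2 ≤ LinearMap.ker (Tfun k) := by
    rw [BSpace, Submodule.span_le]
    rintro f ⟨L, hL, rfl⟩
    simpa [LinearMap.mem_ker, Tfun] using sum_nuW_walsh hk hL
  simpa [LinearMap.mem_ker, Tfun] using hle hf

theorem mainAux (k : ℕ) (hk : 3 ≤ k) :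
    ∃ U : Set (Fin k → Bool), U.ncard = k + 1 ∧ IsUniqSet (BPlus k 2) U := by
  classical
  set Uf : Finset (Fin k → Bool) :=
    Finset.univ.filter (fun x => PosCount x = 1 ∨ PosCount x = k) with hUf
  have hcard : Uf.card = k + 1 := by
    rw [hUf, Finset.filter_or, Finset.card_union_of_disjoint, filter_posCount_one,
      filter_posCount_k]
    · rw [Finset.card_image_of_injective _ eVec_injective, Finset.card_univ, Fintype.card_fin,
        Finset.card_singleton]
    · rw [Finset.disjoint_left]
      intro x hx1 hxk
      have h1 := (Finset.mem_filter.mp hx1).2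
      have h2 := (Finset.mem_filter.mp hxk).2
      omega
  have huniq : IsUniqSet (BPlus k 2) ↑Uf := by
    rintro φ ⟨hspan, hpos⟩ hvan
    have hzero : ∑ x : Fin k → Bool, nuW k x * φ x = 0 := sum_nuW_of_mem hk hspan
    have hnn : ∀ x ∈ Finset.univ, 0 ≤ nuW k x * φ x := by
      intro x _
      by_cases hx : PosCount x = 1 ∨ PosCount x = k
      · have hx0 : φ x = 0 := hvan x (by simp [hUf, hx])
        simp [hx0]
      · push_neg at hx
        exact mul_nonneg (nuW_pos hk x hx.1 hx.2).le (hpos x)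
    have hall : ∀ x ∈ Finset.univ, nuW k x * φ x = 0 :=
      (Finset.sum_eq_zero_iff_of_nonneg hnn).mp hzero
    funext x
    simp only [Pi.zero_apply]
    by_cases hx : PosCount x = 1 ∨ PosCount x = k
    · exact hvan x (by simp [hUf, hx])
    · push_neg at hx
      have h := hall x (Finset.mem_univ x)
      have hνpos := nuW_pos hk x hx.1 hx.2
      rcases mul_eq_zero.mp h with h' | h'
      · exact absurd h' hνpos.ne'
      · exact h'
  exact ⟨↑Uf, by simp [Set.ncard_coe_finset, hcard], huniq⟩

/-- For `k ≥ 3`, `u(k,2) ≤ k + 1`, i.e., there is a set of uniqueness for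
`(B^k_2)_+` of cardinality at most `k + 1`. -/
theorem stmt_8 (k : ℕ) (hk : 3 ≤ k) :
    uMin k 2 ≤ k + 1 ∧
      ∃ U : Set (Fin k → Bool), U.ncard ≤ k + 1 ∧ IsUniqSet (BPlus k 2) U := by
  obtain ⟨U, hU, huniq⟩ := mainAux k hk
  exact ⟨Nat.sInf_le ⟨U, hU, huniq⟩, U, le_of_eq hU, huniq⟩
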